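/- Let λ_1, …, λ_N ∈ ℂ satisfy |λ_j| < 1 for all j, and define the matrix C ∈ ℂ^{N×N} by C_{hj} = −(λ_h + 1)(conj(λ_j) + 1) / (2(λ_h · conj(λ_j) − 1)) (equivalently, C_{hj} = (1 + λ_h)(1 + conj(λ_j)) / (2(1 − λ_h · conj(λ_j)))). Then C is Hermitian and positive semidefinite; moreover, if the λ_j are pairwise distinct and λ_j ≠ −1 for all j, then C is positive definite. -/

import Mathlib

open Matrix ComplexOrder

private lemma cauchy_div_aux (A z : ℂ) (_hz : (1 : ℂ) - z ≠ 0) :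
    -A / (2 * (z - 1)) = A / 2 * (1 - z)⁻¹ := by
  rw [show (2:ℂ)*(z-1) = -(2*(1-z)) by ring, div_neg, neg_div, neg_neg, ← div_div,
    div_eq_mul_inv]

private lemma cauchy_conj_aux (z w : ℂ) :
    (starRingEnd ℂ) (-((z + 1) * ((starRingEnd ℂ) w + 1)) / (2 * (z * (starRingEnd ℂ) w - 1)))
      = -((w + 1) * ((starRingEnd ℂ) z + 1)) / (2 * (w * (starRingEnd ℂ) z - 1)) := by
  rw [map_div₀]
  simp only [map_neg, _root_.map_mul, map_add, _root_.map_one, map_sub, map_ofNat,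
    Complex.conj_conj]
  ring

private lemma cauchy_aux {N : ℕ} (lam : Fin N → ℂ)
    (hlam : ∀ j, ‖lam j‖ < 1) (x : Fin N → ℂ) :
    star x ⬝ᵥ ((Matrix.of fun h j : Fin N =>
        -((lam h + 1) * ((starRingEnd ℂ) (lam j) + 1)) /
          (2 * (lam h * (starRingEnd ℂ) (lam j) - 1))) *ᵥ x)
      = (((∑' k : ℕ, Complex.normSq (∑ h, (starRingEnd ℂ) (x h) * (lam h + 1) * lam h ^ k)) / 2 : ℝ) : ℂ)
      ∧ Summable (fun k : ℕ => Complex.normSq (∑ h, (starRingEnd ℂ) (x h) * (lam h + 1) * lam h ^ k)) := by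
  classical
  set S : ℕ → ℂ := fun k => ∑ h, (starRingEnd ℂ) (x h) * (lam h + 1) * lam h ^ k with hS
  have hr : ∀ h j : Fin N, ‖lam h * (starRingEnd ℂ) (lam j)‖ < 1 := by
    intro h j
    rw [norm_mul, RCLike.norm_conj]
    calc ‖lam h‖ * ‖lam j‖ ≤ 1 * ‖lam j‖ :=
          mul_le_mul_of_nonneg_right (le_of_lt (hlam h)) (norm_nonneg _)
      _ = ‖lam j‖ := one_mul _
      _ < 1 := hlam j
  have hne : ∀ h j : Fin N, (1 : ℂ) - lam h * (starRingEnd ℂ) (lam j) ≠ 0 := by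
    intro h j hc
    have h1 : lam h * (starRingEnd ℂ) (lam j) = 1 := by linear_combination -hc
    have h2 := hr h j
    rw [h1] at h2
    simp at h2
  set f : Fin N → ℕ → ℂ := fun h k => (starRingEnd ℂ) (x h) * (lam h + 1) * lam h ^ k with hf
  set t : Fin N → Fin N → ℕ → ℂ := fun h j k => (1/2 : ℂ) * f h k * (starRingEnd ℂ) (f j k) with ht
  have ht' : ∀ h j : Fin N, t h j = fun k =>
      ((1/2 : ℂ) * ((starRingEnd ℂ) (x h) * (lam h + 1)) * (x j * ((starRingEnd ℂ) (lam j) + 1)))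
        * (lam h * (starRingEnd ℂ) (lam j)) ^ k := by
    intro h j
    funext k
    simp only [ht, hf, _root_.map_mul, map_pow, map_add, _root_.map_one, Complex.conj_conj,
      mul_pow]
    ring
  have hsumt : ∀ h j : Fin N, Summable (t h j) := by
    intro h j
    rw [ht' h j]
    exact (summable_geometric_of_norm_lt_one (hr h j)).mul_left _
  have hentry : ∀ h j : Fin N,
      (starRingEnd ℂ) (x h) *
        (-((lam h + 1) * ((starRingEnd ℂ) (lam j) + 1)) /
          (2 * (lam h * (starRingEnd ℂ) (lam j) - 1))) * x j = ∑' k : ℕ, t h j k := by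
    intro h j
    rw [ht' h j, tsum_mul_left, tsum_geometric_of_norm_lt_one (hr h j),
      cauchy_div_aux _ _ (hne h j)]
    ring
  have hqf : star x ⬝ᵥ ((Matrix.of fun h j : Fin N =>
        -((lam h + 1) * ((starRingEnd ℂ) (lam j) + 1)) /
          (2 * (lam h * (starRingEnd ℂ) (lam j) - 1))) *ᵥ x)
      = ∑ h, ∑ j, ∑' k, t h j k := by
    simp only [dotProduct, mulVec, Pi.star_apply, Matrix.of_apply, Finset.mul_sum]
    refine Finset.sum_congr rfl fun h _ => Finset.sum_congr rfl fun j _ => ?_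
    rw [← hentry h j]
    simp only [starRingEnd_apply]
    ring
  have hswap : ∑ h, ∑ j, ∑' k, t h j k = ∑' k, ∑ h, ∑ j, t h j k := by
    rw [Summable.tsum_finsetSum (fun h _ => summable_sum (fun j _ => hsumt h j))]
    exact Finset.sum_congr rfl fun h _ => (Summable.tsum_finsetSum (fun j _ => hsumt h j)).symm
  have hterm : ∀ k : ℕ, ∑ h, ∑ j, t h j k = ((Complex.normSq (S k) / 2 : ℝ) : ℂ) := by
    intro k
    have h1 : ∑ h, ∑ j, t h j k = (1/2 : ℂ) * ((∑ h, f h k) * (starRingEnd ℂ) (∑ j, f j k)) := by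
      rw [map_sum, Finset.sum_mul_sum]
      simp only [ht, Finset.mul_sum]
      exact Finset.sum_congr rfl fun h _ => Finset.sum_congr rfl fun j _ => by ring
    rw [h1]
    have hSf : ∑ h, f h k = S k := rfl
    rw [hSf, Complex.mul_conj]
    push_cast
    ring
  have hsumC : Summable (fun k : ℕ => ∑ h, ∑ j, t h j k) :=
    summable_sum (fun h _ => summable_sum (fun j _ => hsumt h j))
  have hsumR : Summable (fun k : ℕ => Complex.normSq (S k)) := by
    have h2 : Summable (fun k : ℕ => ((Complex.normSq (S k) / 2 : ℝ) : ℂ)) :=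
      hsumC.congr (fun k => hterm k)
    have h3 := Complex.summable_ofReal.mp h2
    have h4 := h3.mul_left (2 : ℝ)
    refine h4.congr fun k => ?_
    ring
  refine ⟨?_, hsumR⟩
  rw [hqf, hswap, tsum_congr hterm, ← Complex.ofReal_tsum]
  congr 1
  rw [← tsum_div_const]

theorem cauchy_matrix_posSemidef {N : ℕ} (lam : Fin N → ℂ)
    (hlam : ∀ j, ‖lam j‖ < 1) :
    (Matrix.of fun h j : Fin N =>
        -((lam h + 1) * ((starRingEnd ℂ) (lam j) + 1)) /
          (2 * (lam h * (starRingEnd ℂ) (lam j) - 1))).IsHermitian ∧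
    (Matrix.of fun h j : Fin N =>
        -((lam h + 1) * ((starRingEnd ℂ) (lam j) + 1)) /
          (2 * (lam h * (starRingEnd ℂ) (lam j) - 1))).PosSemidef ∧
    (Function.Injective lam → (∀ j, lam j ≠ -1) →
      (Matrix.of fun h j : Fin N =>
          -((lam h + 1) * ((starRingEnd ℂ) (lam j) + 1)) /
            (2 * (lam h * (starRingEnd ℂ) (lam j) - 1))).PosDef) := by
  classical
  have herm : (Matrix.of fun h j : Fin N =>
        -((lam h + 1) * ((starRingEnd ℂ) (lam j) + 1)) /
          (2 * (lam h * (starRingEnd ℂ) (lam j) - 1))).IsHermitian := by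
    rw [Matrix.IsHermitian]
    ext i j
    rw [conjTranspose_apply, Matrix.of_apply, Matrix.of_apply]
    exact cauchy_conj_aux (lam j) (lam i)
  have hpsd : (Matrix.of fun h j : Fin N =>
        -((lam h + 1) * ((starRingEnd ℂ) (lam j) + 1)) /
          (2 * (lam h * (starRingEnd ℂ) (lam j) - 1))).PosSemidef := by
    refine posSemidef_iff_dotProduct_mulVec.mpr ⟨herm, fun x => ?_⟩
    obtain ⟨hq, hs⟩ := cauchy_aux lam hlam x
    rw [hq, Complex.zero_le_real]
    exact div_nonneg (tsum_nonneg fun k => Complex.normSq_nonneg _) (by norm_num)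
  refine ⟨herm, hpsd, fun hinj hne1 => ?_⟩
  refine posDef_iff_dotProduct_mulVec.mpr ⟨herm, fun x hx => ?_⟩
  obtain ⟨hq, hs⟩ := cauchy_aux lam hlam x
  refine lt_of_le_of_ne ((posSemidef_iff_dotProduct_mulVec.mp hpsd).2 x) fun h0 => hx ?_
  have h0' := h0.symm
  rw [hq, Complex.ofReal_eq_zero] at h0'
  have hT0 : (∑' k : ℕ, Complex.normSq (∑ h, (starRingEnd ℂ) (x h) * (lam h + 1) * lam h ^ k)) = 0 := by
    linarith
  have hSk : ∀ k : ℕ, (∑ h, (starRingEnd ℂ) (x h) * (lam h + 1) * lam h ^ k) = 0 := by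
    intro k
    have hle := Summable.le_tsum hs k (fun j _ => Complex.normSq_nonneg _)
    rw [hT0] at hle
    exact Complex.normSq_eq_zero.mp (le_antisymm hle (Complex.normSq_nonneg _))
  set c : Fin N → ℂ := fun h => (starRingEnd ℂ) (x h) * (lam h + 1) with hc
  have hmv : (Matrix.vandermonde lam)ᵀ *ᵥ c = 0 := by
    funext k
    simp only [mulVec, dotProduct, Matrix.transpose_apply, Matrix.vandermonde_apply,
      Pi.zero_apply, hc]
    calc ∑ h, lam h ^ (k : ℕ) * ((starRingEnd ℂ) (x h) * (lam h + 1))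
        = ∑ h, (starRingEnd ℂ) (x h) * (lam h + 1) * lam h ^ (k : ℕ) :=
          Finset.sum_congr rfl fun h _ => by ring
      _ = 0 := hSk (k : ℕ)
  have hdet : (Matrix.vandermonde lam)ᵀ.det ≠ 0 := by
    rw [Matrix.det_transpose, Matrix.det_vandermonde]
    refine Finset.prod_ne_zero_iff.mpr fun i _ => Finset.prod_ne_zero_iff.mpr fun j hj => ?_
    rw [sub_ne_zero]
    intro hij
    have hji : j = i := hinj hij
    rw [hji] at hj
    simp at hj
  have hc0 : c = 0 := Matrix.eq_zero_of_mulVec_eq_zero hdet hmv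
  funext h
  have hch := congrFun hc0 h
  simp only [hc, Pi.zero_apply, mul_eq_zero, map_eq_zero] at hch
  rcases hch with h1 | h1
  · exact h1
  · exact absurd (by linear_combination h1) (hne1 h)
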